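/- For negative behaviours G and H that are disjoint (their directories are disjoint sets of ramifications), the orthogonal of their intersection is the union of their orthogonals: (G ∩ H)^⊥ = G^⊥ ∪ H^⊥; consequently the incarnation of G ∩ H is in bijection with the cartesian product of the incarnations of G and H. -/

import Mathlib

/-! Designs of ludics, as (possibly infinitely branching) trees of alternating
positive actions `(+, ξ, I)` and negative actions `(-, ζ, J)`, with leaves
`Ω` (the partial design) and the daimon `✠`. Addresses (loci) are lists of
natural numbers (biases). -/

mutual
  inductive PosDesign : Type
    | omega : PosDesign
    | daimon : PosDesign
    | pos : List ℕ → Finset ℕ → (ℕ → NegDesign) → PosDesign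
  inductive NegDesign : Type
    | neg : (Finset ℕ → PosDesign) → NegDesign
end

def NegDesign.app : NegDesign → Finset ℕ → PosDesign
  | .neg f, J => f J

/-! The order `⊑` on designs, generated by `Ω ⊑ φ`, `φ ⊑ ✠`, congruence,
reflexivity and transitivity.  The two boolean parameters state whether the
axiom `Ω ⊑ φ` (resp. `φ ⊑ ✠`) is allowed: `LeP true true` is the observational
order `⊑`, `LeP false true` is `≤L`, and `LeP true false` is `≤R` (the stable
order). -/

mutual
  inductive LeP (o d : Bool) : PosDesign → PosDesign → Prop
    | omega (φ : PosDesign) (h : o = true) : LeP o d .omega φ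
    | daimon (φ : PosDesign) (h : d = true) : LeP o d φ .daimon
    | refl (φ : PosDesign) : LeP o d φ φ
    | trans {φ₁ φ₂ φ₃ : PosDesign} :
        LeP o d φ₁ φ₂ → LeP o d φ₂ φ₃ → LeP o d φ₁ φ₃
    | pos (ξ : List ℕ) (I : Finset ℕ) (k k' : ℕ → NegDesign)
        (h : ∀ i ∈ I, LeN o d (k i) (k' i)) : LeP o d (.pos ξ I k) (.pos ξ I k')
  inductive LeN (o d : Bool) : NegDesign → NegDesign → Prop
    | neg (f f' : Finset ℕ → PosDesign)
        (h : ∀ J, LeP o d (f J) (f' J)) : LeN o d (.neg f) (.neg f')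
end

/-! Normalization (the affine abstract machine) and orthogonality. -/

/-- The environment update in rule (R): the cut design at address `ξ` is
consumed, and its immediate subdesigns `k i` (for `i ∈ I`) are installed at the
addresses `ξ ⋆ i`. -/
def stepEnv (Ψ : List ℕ → Option NegDesign) (ξ : List ℕ) (I : Finset ℕ)
    (k : ℕ → NegDesign) : List ℕ → Option NegDesign :=
  fun ζ =>
    if ζ ≠ [] ∧ ζ.dropLast = ξ ∧ ζ.getLast! ∈ I then some (k ζ.getLast!)
    else if ζ = ξ then none else Ψ ζ

/-- `Conv φ Ψ` : the normalization of the net `⟨φ | Ψ⟩` converges, i.e. the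
weak reduction machine started on `φ` with environment `Ψ` reaches `✠`. -/
inductive Conv : PosDesign → (List ℕ → Option NegDesign) → Prop
  | dai (Ψ : List ℕ → Option NegDesign) : Conv .daimon Ψ
  | step (ξ : List ℕ) (I : Finset ℕ) (k : ℕ → NegDesign)
      (f : Finset ℕ → PosDesign) (Ψ : List ℕ → Option NegDesign)
      (h : Ψ ξ = some (.neg f)) :
      Conv (f I) (stepEnv Ψ ξ I k) → Conv (.pos ξ I k) Ψ

/-- Orthogonality of a positive design on the base `⊢ ε` and a negative design
on the base `ε ⊢`: normalization of the cut between them converges to `✠`. -/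
def orth (φ : PosDesign) (ψ : NegDesign) : Prop :=
  Conv φ (fun ζ => if ζ = [] then some ψ else none)

/-! Typing (well-formedness) of designs on a given base. -/

mutual
  /-- `WFP φ Λ` : `φ` is a design on the positive base `⊢ Λ`. -/
  inductive WFP : PosDesign → Finset (List ℕ) → Prop
    | omega (Λ : Finset (List ℕ)) : WFP .omega Λ
    | dai (Λ : Finset (List ℕ)) : WFP .daimon Λ
    | pos (ξ : List ℕ) (I : Finset ℕ) (k : ℕ → NegDesign)
        (Λ : Finset (List ℕ)) (Λi : ℕ → Finset (List ℕ))
        (hξ : ξ ∈ Λ)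
        (hsub : ∀ i ∈ I, Λi i ⊆ Λ.erase ξ)
        (hdisj : ∀ i ∈ I, ∀ j ∈ I, i ≠ j → Disjoint (Λi i) (Λi j))
        (hk : ∀ i ∈ I, WFN (k i) (ξ ++ [i]) (Λi i)) :
        WFP (.pos ξ I k) Λ
  /-- `WFN ψ ξ Λ` : `ψ` is a design on the negative base `ξ ⊢ Λ`. -/
  inductive WFN : NegDesign → List ℕ → Finset (List ℕ) → Prop
    | neg (f : Finset ℕ → PosDesign) (ξ : List ℕ) (Λ : Finset (List ℕ))
        (h : ∀ J : Finset ℕ, WFP (f J) (J.image (fun j => ξ ++ [j]) ∪ Λ)) :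
        WFN (.neg f) ξ Λ
end

/-! Behaviours, directories, incarnation. -/

/-- The orthogonal of a set of negative designs on the base `ε ⊢`. -/
def orthSetN (G : Set NegDesign) : Set PosDesign :=
  {φ | WFP φ {([] : List ℕ)} ∧ ∀ ψ ∈ G, orth φ ψ}

/-- The orthogonal of a set of positive designs on the base `⊢ ε`. -/
def orthSetP (A : Set PosDesign) : Set NegDesign :=
  {ψ | WFN ψ [] ∅ ∧ ∀ φ ∈ A, orth φ ψ}

/-- A negative behaviour on the base `ε ⊢`: a set of designs equal to its
bi-orthogonal. -/
def IsNegBehaviour (G : Set NegDesign) : Prop :=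
  (∀ ψ ∈ G, WFN ψ [] ∅) ∧ G = orthSetP (orthSetN G)

/-- `IsIncarnation G ψ ψ₀` : `ψ₀` is the incarnation `|ψ|_G` of `ψ` in `G`,
i.e. the smallest design of `G` contained in `ψ` for the stable order `≤R`. -/
def IsIncarnation (G : Set NegDesign) (ψ ψ₀ : NegDesign) : Prop :=
  ψ₀ ∈ G ∧ LeN true false ψ₀ ψ ∧ ∀ χ ∈ G, LeN true false χ ψ → LeN true false ψ₀ χ

/-- The set of incarnated designs of `G`. -/
def Incar (G : Set NegDesign) : Set NegDesign := {ψ | IsIncarnation G ψ ψ}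

/-- The directory of a negative behaviour: the set of ramifications `I` such
that `(-, ε, I)` occurs as an initial action of some incarnated design. -/
def Dir (G : Set NegDesign) : Set (Finset ℕ) :=
  {I | ∃ ψ ∈ Incar G, ψ.app I ≠ PosDesign.omega}
namespace LudAux

@[simp] lemma app_neg (f : Finset ℕ → PosDesign) (J : Finset ℕ) :
    (NegDesign.neg f).app J = f J := rfl

lemma not_conv_omega (Ψ : List ℕ → Option NegDesign) : ¬ Conv .omega Ψ := by
  intro h; cases h

lemma leP_flat {φ ψ : PosDesign} (h : LeP true false φ ψ) :
    (ψ = .omega → φ = .omega) ∧ (ψ = .daimon → φ = .omega ∨ φ = .daimon) := by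
  refine @LeP.rec true false
    (fun a b _ => (b = .omega → a = .omega) ∧ (b = .daimon → a = .omega ∨ a = .daimon))
    (fun _ _ _ => True) ?_ ?_ ?_ ?_ ?_ ?_ _ _ h
  · simp
  · intro φ hd; cases hd
  · exact fun φ => ⟨fun h => h, fun h => Or.inr h⟩
  · intro φ₁ φ₂ φ₃ a a1 ih1 ih2
    refine ⟨fun h => ih1.1 (ih2.1 h), fun h => ?_⟩
    rcases ih2.2 h with h' | h'
    · exact Or.inl (ih1.1 h')
    · exact ih1.2 h'
  · simp
  · simp

lemma eq_omega_of_leP {φ : PosDesign} (h : LeP true false φ .omega) : φ = .omega :=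
  (leP_flat h).1 rfl

lemma leP_omega (φ : PosDesign) : LeP true false .omega φ := LeP.omega φ rfl

lemma leN_iff {f g : Finset ℕ → PosDesign} :
    LeN true false (.neg f) (.neg g) ↔ ∀ J, LeP true false (f J) (g J) := by
  constructor
  · intro h; cases h with | neg _ _ h => exact h
  · exact fun h => LeN.neg f g h

lemma leN_refl (ψ : NegDesign) : LeN true false ψ ψ := by
  cases ψ with | neg f => exact LeN.neg f f (fun J => LeP.refl _)

end LudAux
namespace LudAux

/-- The environment left after the initial negative design has been consumed. -/
def E (I : Finset ℕ) (k : ℕ → NegDesign) : List ℕ → Option NegDesign :=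
  fun ζ => if ζ ≠ [] ∧ ζ.dropLast = [] ∧ ζ.getLast! ∈ I then some (k ζ.getLast!) else none

lemma stepEnv_base (f : Finset ℕ → PosDesign) (I : Finset ℕ) (k : ℕ → NegDesign) :
    stepEnv (fun ζ => if ζ = [] then some (NegDesign.neg f) else none) [] I k = E I k := by
  funext ζ
  unfold stepEnv E
  by_cases h : ζ ≠ [] ∧ ζ.dropLast = [] ∧ ζ.getLast! ∈ I
  · rw [if_pos h, if_pos h]
  · rw [if_neg h, if_neg h]
    by_cases h2 : ζ = [] <;> simp [h2]

lemma orth_pos_iff {I : Finset ℕ} {k : ℕ → NegDesign} {f : Finset ℕ → PosDesign} :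
    orth (PosDesign.pos [] I k) (NegDesign.neg f) ↔ Conv (f I) (E I k) := by
  constructor
  · intro h
    cases h with
    | step _ _ _ f' _ h hc =>
        simp only [if_true, ite_true, Option.some.injEq, NegDesign.neg.injEq] at h
        rw [h]
        rwa [stepEnv_base] at hc
  · intro h
    exact Conv.step [] I k f _ (by simp) (by rwa [stepEnv_base])

lemma E_singleton {I : Finset ℕ} {k : ℕ → NegDesign} {i : ℕ} (hi : i ∈ I) :
    E I k [i] = some (k i) := by
  have h1 : ([i] : List ℕ).getLast! = i := rfl
  have : (([i] : List ℕ) ≠ [] ∧ ([i] : List ℕ).dropLast = [] ∧ ([i] : List ℕ).getLast! ∈ I) := by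
    refine ⟨by simp, by simp, by rwa [h1]⟩
  rw [E, if_pos this, h1]

/-- The all-daimon negative design. -/
def dai : NegDesign := .neg fun _ => .daimon

/-- A well-formed positive design on base `⊢ {[i] : i ∈ I}` other than `Ω`
converges against the all-daimon environment. -/
lemma conv_dai {φ : PosDesign} {I : Finset ℕ}
    (hwf : WFP φ ((I.image fun j => [] ++ [j]) ∪ ∅)) (hne : φ ≠ .omega) :
    Conv φ (E I (fun _ => dai)) := by
  cases φ with
  | omega => exact absurd rfl hne
  | daimon => exact Conv.dai _
  | pos ξ J k =>
      have hξ : ξ ∈ ((I.image fun j => [] ++ [j]) ∪ ∅) := by cases hwf; assumption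
      simp only [Finset.union_empty, Finset.mem_image, List.nil_append] at hξ
      obtain ⟨i, hi, rfl⟩ := hξ
      exact Conv.step [i] J k (fun _ => .daimon) _ (E_singleton hi) (Conv.dai _)

end LudAux
namespace LudAux

/-- Ramifications occurring as heads of designs of the orthogonal. -/
def Heads (K : Set NegDesign) : Set (Finset ℕ) :=
  {I | ∃ k, PosDesign.pos [] I k ∈ orthSetN K}

lemma omega_not_mem_orthSetN {K : Set NegDesign} (hne : K.Nonempty) :
    PosDesign.omega ∉ orthSetN K := by
  rintro ⟨-, h⟩
  obtain ⟨ψ, hψ⟩ := hne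
  exact not_conv_omega _ (h ψ hψ)

lemma wfn_app {ψ : NegDesign} (h : WFN ψ [] ∅) (J : Finset ℕ) :
    WFP (ψ.app J) ((J.image fun j => [] ++ [j]) ∪ ∅) := by
  cases ψ with
  | neg f => cases h with | neg _ _ _ h => exact h J

/-- Membership in a nonempty behaviour only depends on well-formedness and the
behaviour of each `ψ.app I` against the residual environments coming from the
orthogonal. -/
lemma mem_behaviour_iff {K : Set NegDesign} (hK : IsNegBehaviour K) (hne : K.Nonempty)
    (ψ : NegDesign) :
    ψ ∈ K ↔ WFN ψ [] ∅ ∧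
      ∀ I k, PosDesign.pos [] I k ∈ orthSetN K → Conv (ψ.app I) (E I k) := by
  obtain ⟨f, rfl⟩ : ∃ f, ψ = NegDesign.neg f := by cases ψ with | neg f => exact ⟨f, rfl⟩
  constructor
  · intro h
    have hmem : NegDesign.neg f ∈ orthSetP (orthSetN K) := hK.2 ▸ h
    refine ⟨hmem.1, fun I k hIk => ?_⟩
    exact orth_pos_iff.mp (hmem.2 _ hIk)
  · rintro ⟨hwf, h⟩
    rw [hK.2]
    refine ⟨hwf, fun φ hφ => ?_⟩
    cases φ with
    | omega => exact absurd hφ (omega_not_mem_orthSetN hne)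
    | daimon => exact Conv.dai _
    | pos ξ I k =>
        have hξ : ξ ∈ ({([] : List ℕ)} : Finset (List ℕ)) := by
          rcases hφ with ⟨hwfp, -⟩; cases hwfp; assumption
        rw [Finset.mem_singleton] at hξ; subst hξ
        exact orth_pos_iff.mpr (h I k hφ)

/-- Every nonempty behaviour contains the modified design obtained from a
member by replacing components outside `Heads K` arbitrarily, as long as the
components on `Heads K` still converge; in particular membership only depends
on the components at ramifications in `Heads K`. -/
lemma mem_of_agree_on_heads {K : Set NegDesign} (hK : IsNegBehaviour K) (hne : K.Nonempty)
    {ψ χ : NegDesign} (hψ : ψ ∈ K) (hwf : WFN χ [] ∅)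
    (hagree : ∀ I ∈ Heads K, χ.app I = ψ.app I) : χ ∈ K := by
  rw [mem_behaviour_iff hK hne]
  refine ⟨hwf, fun I k hIk => ?_⟩
  rw [hagree I ⟨k, hIk⟩]
  exact ((mem_behaviour_iff hK hne ψ).mp hψ).2 I k hIk

lemma app_ne_omega_of_heads {K : Set NegDesign} {I : Finset ℕ}
    (hI : I ∈ Heads K) {ψ : NegDesign} (hψ : ψ ∈ K) : ψ.app I ≠ PosDesign.omega := by
  obtain ⟨k, hwfp, h⟩ := hI
  intro heq
  have := h ψ hψ
  cases ψ with
  | neg f =>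
      rw [orth_pos_iff] at this
      rw [app_neg] at heq
      rw [heq] at this
      exact not_conv_omega _ this

/-- Conversely: if no member of `K` has `Ω` at `I`, then `I ∈ Heads K`. -/
lemma heads_of_forall_ne {K : Set NegDesign} (hwfK : ∀ ψ ∈ K, WFN ψ [] ∅) {I : Finset ℕ}
    (h : ∀ ψ ∈ K, ψ.app I ≠ PosDesign.omega) : I ∈ Heads K := by
  refine ⟨fun _ => dai, ?_, fun ψ hψ => ?_⟩
  · refine WFP.pos [] I _ _ (fun _ => ∅) (Finset.mem_singleton_self _) (by simp) (by simp)
      (fun i _ => ?_)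
    exact WFN.neg _ _ _ (fun J => WFP.dai _)
  · cases ψ with
    | neg f =>
        rw [orth_pos_iff]
        exact conv_dai (wfn_app (hwfK _ hψ) I) (by simpa using h _ hψ)

end LudAux
namespace LudAux

/-- Classical `if` on positive designs. -/
noncomputable def pIf (p : Prop) (a b : PosDesign) : PosDesign :=
  @ite _ p (Classical.propDecidable p) a b

lemma pIf_pos {p : Prop} {a b : PosDesign} (h : p) : pIf p a b = a := by
  rw [pIf, if_pos h]

lemma pIf_neg {p : Prop} {a b : PosDesign} (h : ¬ p) : pIf p a b = b := by
  rw [pIf, if_neg h]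

lemma pIf_wf {p : Prop} {a b : PosDesign} {Λ : Finset (List ℕ)}
    (ha : WFP a Λ) (hb : WFP b Λ) : WFP (pIf p a b) Λ := by
  by_cases h : p
  · rwa [pIf_pos h]
  · rwa [pIf_neg h]

/-- The "flat" design of a behaviour: daimon exactly on `Heads K`. -/
noncomputable def flatOf (K : Set NegDesign) : NegDesign :=
  .neg fun J => pIf (J ∈ Heads K) .daimon .omega

lemma flatOf_incar {K : Set NegDesign} (hK : IsNegBehaviour K) (hne : K.Nonempty) :
    flatOf K ∈ Incar K := by
  have hmem : flatOf K ∈ K := by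
    rw [mem_behaviour_iff hK hne]
    constructor
    · exact WFN.neg _ _ _ (fun J => pIf_wf (WFP.dai _) (WFP.omega _))
    · intro I k hIk
      have : (flatOf K).app I = .daimon := pIf_pos ⟨k, hIk⟩
      rw [this]; exact Conv.dai _
  refine ⟨hmem, leN_refl _, fun ζ hζ hle => ?_⟩
  cases ζ with
  | neg g =>
      rw [flatOf, leN_iff] at hle ⊢
      intro J
      by_cases hJ : J ∈ Heads K
      · rw [pIf_pos hJ]
        have h1 := (leP_flat (hle J)).2 (pIf_pos hJ)
        have h2 : g J ≠ .omega := by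
          have := app_ne_omega_of_heads hJ hζ; simpa using this
        rcases h1 with h | h
        · exact absurd h h2
        · rw [h]; exact LeP.refl _
      · rw [pIf_neg hJ]; exact leP_omega _

lemma heads_subset_dir {K : Set NegDesign} (hK : IsNegBehaviour K) (hne : K.Nonempty) :
    Heads K ⊆ Dir K := by
  intro I hI
  refine ⟨flatOf K, flatOf_incar hK hne, ?_⟩
  have : (flatOf K).app I = .daimon := pIf_pos hI
  rw [this]; exact fun h => by cases h

lemma dir_subset_must {K : Set NegDesign} (hK : IsNegBehaviour K) (hne : K.Nonempty)
    {I : Finset ℕ} (hI : I ∈ Dir K) : ∀ χ ∈ K, χ.app I ≠ PosDesign.omega := by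
  intro χ hχ heq
  obtain ⟨ψ, hinc, hψne⟩ := hI
  have hInotH : I ∉ Heads K := fun hmem => app_ne_omega_of_heads hmem hχ heq
  -- the design `ψ` with its `I`-component erased
  set ψ' : NegDesign := .neg (fun J => pIf (J = I) .omega (ψ.app J)) with hψ'
  have hψK : ψ ∈ K := hinc.1
  have hwfψ := hK.1 _ hψK
  have hψ'K : ψ' ∈ K := by
    refine mem_of_agree_on_heads hK hne hψK ?_ ?_
    · exact WFN.neg _ _ _ (fun J => pIf_wf (WFP.omega _) (wfn_app hwfψ J))
    · intro J hJ
      have : J ≠ I := fun h => hInotH (h ▸ hJ)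
      exact pIf_neg this
  have hle : LeN true false ψ' ψ := by
    cases ψ with
    | neg f =>
        refine LeN.neg _ _ (fun J => ?_)
        by_cases hJ : J = I
        · rw [pIf_pos hJ]; exact leP_omega _
        · rw [pIf_neg hJ]; exact LeP.refl _
  have := hinc.2.2 ψ' hψ'K hle
  -- ψ ≤ ψ' at I gives ψ.app I = Ω
  cases ψ with
  | neg f =>
      rw [leN_iff] at this
      have hI' := this I
      rw [app_neg, pIf_pos rfl] at hI'
      exact hψne (eq_omega_of_leP hI')

lemma dir_eq_heads {K : Set NegDesign} (hK : IsNegBehaviour K) (hne : K.Nonempty) :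
    Dir K = Heads K := by
  apply Set.Subset.antisymm
  · intro I hI
    exact heads_of_forall_ne hK.1 (dir_subset_must hK hne hI)
  · exact heads_subset_dir hK hne

end LudAux
namespace LudAux

lemma inter_behaviour {G H : Set NegDesign} (hG : IsNegBehaviour G)
    (hH : IsNegBehaviour H) : IsNegBehaviour (G ∩ H) := by
  refine ⟨fun ψ hψ => hG.1 ψ hψ.1, Set.Subset.antisymm ?_ ?_⟩
  · intro ψ hψ
    exact ⟨hG.1 ψ hψ.1, fun φ hφ => hφ.2 ψ hψ⟩
  · intro ψ hψ
    constructor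
    · rw [hG.2]
      exact ⟨hψ.1, fun φ hφ => hψ.2 φ ⟨hφ.1, fun ψ' hψ' => hφ.2 ψ' hψ'.1⟩⟩
    · rw [hH.2]
      exact ⟨hψ.1, fun φ hφ => hψ.2 φ ⟨hφ.1, fun ψ' hψ' => hφ.2 ψ' hψ'.2⟩⟩

lemma dai_mem {K : Set NegDesign} (hK : IsNegBehaviour K) (hne : K.Nonempty) :
    dai ∈ K := by
  rw [mem_behaviour_iff hK hne]
  exact ⟨WFN.neg _ _ _ (fun J => WFP.dai _), fun I k _ => Conv.dai _⟩

/-- Main inclusion for part 1 : if `I ∉ Dir G` then a design of `(G ∩ H)^⊥`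
with head `I` is already in `H^⊥`. -/
lemma incl_of_not_dir {G H : Set NegDesign} (hG : IsNegBehaviour G)
    (hH : IsNegBehaviour H) (hneG : G.Nonempty) (hneH : H.Nonempty)
    (hdisj : Dir G ∩ Dir H = ∅) {I : Finset ℕ} {k : ℕ → NegDesign}
    (hI : I ∉ Dir G) (hφ : PosDesign.pos [] I k ∈ orthSetN (G ∩ H)) :
    PosDesign.pos [] I k ∈ orthSetN H := by
  refine ⟨hφ.1, fun ψ hψ => ?_⟩
  obtain ⟨f, rfl⟩ : ∃ f, ψ = NegDesign.neg f := by cases ψ with | neg f => exact ⟨f, rfl⟩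
  -- the design behaving like `ψ` outside `Dir G` and as daimon on `Dir G`
  set υ : NegDesign := .neg (fun J => pIf (J ∈ Dir G) .daimon (f J)) with hυ
  have hwfψ : WFN (NegDesign.neg f) [] ∅ := hH.1 _ hψ
  have hwfυ : WFN υ [] ∅ :=
    WFN.neg _ _ _ (fun J => pIf_wf (WFP.dai _) (by simpa using wfn_app hwfψ J))
  have hυG : υ ∈ G := by
    rw [mem_behaviour_iff hG hneG]
    refine ⟨hwfυ, fun I' k' hI'k' => ?_⟩
    have hI' : I' ∈ Dir G := (dir_eq_heads hG hneG) ▸ ⟨k', hI'k'⟩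
    have : υ.app I' = .daimon := pIf_pos hI'
    rw [this]; exact Conv.dai _
  have hυH : υ ∈ H := by
    refine mem_of_agree_on_heads hH hneH hψ hwfυ (fun J hJ => ?_)
    have hJH : J ∈ Dir H := (dir_eq_heads hH hneH) ▸ hJ
    have hJG : J ∉ Dir G := fun h =>
      Set.eq_empty_iff_forall_notMem.mp hdisj J ⟨h, hJH⟩
    simpa [hυ] using pIf_neg hJG
  have horth := hφ.2 υ ⟨hυG, hυH⟩
  rw [hυ, orth_pos_iff] at horth
  rw [orth_pos_iff]
  rwa [pIf_neg hI] at horth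

lemma part1 {G H : Set NegDesign} (hG : IsNegBehaviour G) (hH : IsNegBehaviour H)
    (hneG : G.Nonempty) (hneH : H.Nonempty) (hdisj : Dir G ∩ Dir H = ∅) :
    orthSetN (G ∩ H) = orthSetN G ∪ orthSetN H := by
  apply Set.Subset.antisymm
  · intro φ hφ
    cases φ with
    | omega =>
        exfalso
        exact not_conv_omega _
          (hφ.2 dai (dai_mem (inter_behaviour hG hH)
            ⟨dai, dai_mem hG hneG, dai_mem hH hneH⟩))
    | daimon => exact Or.inl ⟨WFP.dai _, fun _ _ => Conv.dai _⟩
    | pos ξ I k =>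
        have hξ : ξ ∈ ({([] : List ℕ)} : Finset (List ℕ)) := by
          rcases hφ with ⟨hwfp, -⟩; cases hwfp; assumption
        rw [Finset.mem_singleton] at hξ; subst hξ
        rcases (not_and_or).mp (Set.eq_empty_iff_forall_notMem.mp hdisj I ∘
            fun h => ⟨h.1, h.2⟩ : ¬ (I ∈ Dir G ∧ I ∈ Dir H)) with hI | hI
        · exact Or.inr (incl_of_not_dir hG hH hneG hneH hdisj hI hφ)
        · refine Or.inl (incl_of_not_dir hH hG hneH hneG ?_ hI ?_)
          · rw [Set.inter_comm]; exact hdisj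
          · rwa [Set.inter_comm]
  · rintro φ (hφ | hφ)
    · exact ⟨hφ.1, fun ψ hψ => hφ.2 ψ hψ.1⟩
    · exact ⟨hφ.1, fun ψ hψ => hφ.2 ψ hψ.2⟩

end LudAux
namespace LudAux

noncomputable def restrD (S : Set (Finset ℕ)) (ψ : NegDesign) : NegDesign :=
  .neg fun J => pIf (J ∈ S) (ψ.app J) .omega

noncomputable def glueD (S T : Set (Finset ℕ)) (χ χ' : NegDesign) : NegDesign :=
  .neg fun J => pIf (J ∈ S) (χ.app J) (pIf (J ∈ T) (χ'.app J) .omega)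

@[simp] lemma restrD_app (S : Set (Finset ℕ)) (ψ : NegDesign) (J : Finset ℕ) :
    (restrD S ψ).app J = pIf (J ∈ S) (ψ.app J) .omega := rfl

@[simp] lemma glueD_app (S T : Set (Finset ℕ)) (χ χ' : NegDesign) (J : Finset ℕ) :
    (glueD S T χ χ').app J = pIf (J ∈ S) (χ.app J) (pIf (J ∈ T) (χ'.app J) .omega) := rfl

lemma neg_ext {ψ χ : NegDesign} (h : ∀ J, ψ.app J = χ.app J) : ψ = χ := by
  cases ψ with | neg f => cases χ with | neg g =>
  exact congrArg _ (funext fun J => h J)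

lemma leN_app_iff {ψ χ : NegDesign} :
    LeN true false ψ χ ↔ ∀ J, LeP true false (ψ.app J) (χ.app J) := by
  cases ψ with | neg f => cases χ with | neg g => simpa using leN_iff

lemma incar_app_omega {K : Set NegDesign} {ψ : NegDesign} {J : Finset ℕ}
    (hψ : ψ ∈ Incar K) (hJ : J ∉ Dir K) : ψ.app J = .omega := by
  by_contra h; exact hJ ⟨ψ, hψ, h⟩

section Main

variable {G H : Set NegDesign}

lemma notG_of_H (hdisj : Dir G ∩ Dir H = ∅) {J : Finset ℕ} (hJ : J ∈ Dir H) : J ∉ Dir G := fun h =>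
  Set.eq_empty_iff_forall_notMem.mp hdisj J ⟨h, hJ⟩

lemma glue_incar (hG : IsNegBehaviour G) (hH : IsNegBehaviour H)
    (hneG : G.Nonempty) (hneH : H.Nonempty) (hdisj : Dir G ∩ Dir H = ∅) {χ χ' : NegDesign} (hχ : χ ∈ Incar G) (hχ' : χ' ∈ Incar H) :
    glueD (Dir G) (Dir H) χ χ' ∈ Incar (G ∩ H) := by
  have hGH := inter_behaviour hG hH
  have hwfχ : WFN χ [] ∅ := hG.1 _ hχ.1
  have hwfχ' : WFN χ' [] ∅ := hH.1 _ hχ'.1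
  set υ := glueD (Dir G) (Dir H) χ χ' with hυdef
  have hwfυ : WFN υ [] ∅ :=
    WFN.neg _ _ _ (fun J => pIf_wf (wfn_app hwfχ J) (pIf_wf (wfn_app hwfχ' J) (WFP.omega _)))
  have hυG : υ ∈ G := by
    refine mem_of_agree_on_heads hG hneG hχ.1 hwfυ (fun J hJ => ?_)
    have : J ∈ Dir G := (dir_eq_heads hG hneG) ▸ hJ
    simpa [hυdef] using pIf_pos this
  have hυH : υ ∈ H := by
    refine mem_of_agree_on_heads hH hneH hχ'.1 hwfυ (fun J hJ => ?_)
    have hJH : J ∈ Dir H := (dir_eq_heads hH hneH) ▸ hJ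
    have hJG : J ∉ Dir G := notG_of_H hdisj hJH
    rw [hυdef, glueD_app, pIf_neg hJG, pIf_pos hJH]
  refine ⟨⟨hυG, hυH⟩, leN_refl _, fun τ hτ hle => ?_⟩
  have hleJ := leN_app_iff.mp hle
  -- restrictions of τ
  have hwfτ : WFN τ [] ∅ := hG.1 _ hτ.1
  have hρG : restrD (Dir G) τ ∈ G := by
    refine mem_of_agree_on_heads hG hneG hτ.1
      (WFN.neg _ _ _ (fun J => pIf_wf (wfn_app hwfτ J) (WFP.omega _))) (fun J hJ => ?_)
    exact pIf_pos ((dir_eq_heads hG hneG) ▸ hJ)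
  have hρH : restrD (Dir H) τ ∈ H := by
    refine mem_of_agree_on_heads hH hneH hτ.2
      (WFN.neg _ _ _ (fun J => pIf_wf (wfn_app hwfτ J) (WFP.omega _))) (fun J hJ => ?_)
    exact pIf_pos ((dir_eq_heads hH hneH) ▸ hJ)
  have hρχ : LeN true false (restrD (Dir G) τ) χ := by
    refine leN_app_iff.mpr (fun J => ?_)
    by_cases hJ : J ∈ Dir G
    · rw [restrD_app, pIf_pos hJ]
      have := hleJ J
      rwa [glueD_app, pIf_pos hJ] at this
    · rw [restrD_app, pIf_neg hJ]; exact leP_omega _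
  have hρχ' : LeN true false (restrD (Dir H) τ) χ' := by
    refine leN_app_iff.mpr (fun J => ?_)
    by_cases hJ : J ∈ Dir H
    · rw [restrD_app, pIf_pos hJ]
      have := hleJ J
      rwa [glueD_app, pIf_neg (notG_of_H hdisj hJ), pIf_pos hJ] at this
    · rw [restrD_app, pIf_neg hJ]; exact leP_omega _
  have hχρ := hχ.2.2 _ hρG hρχ
  have hχ'ρ := hχ'.2.2 _ hρH hρχ'
  refine leN_app_iff.mpr (fun J => ?_)
  by_cases hJG : J ∈ Dir G
  · rw [glueD_app, pIf_pos hJG]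
    have := leN_app_iff.mp hχρ J
    rwa [restrD_app, pIf_pos hJG] at this
  · by_cases hJH : J ∈ Dir H
    · rw [glueD_app, pIf_neg hJG, pIf_pos hJH]
      have := leN_app_iff.mp hχ'ρ J
      rwa [restrD_app, pIf_pos hJH] at this
    · rw [glueD_app, pIf_neg hJG, pIf_neg hJH]; exact leP_omega _

lemma restr_incar (hG : IsNegBehaviour G) (hH : IsNegBehaviour H)
    (hneG : G.Nonempty) (hneH : H.Nonempty) (hdisj : Dir G ∩ Dir H = ∅) {ψ : NegDesign} (hψ : ψ ∈ Incar (G ∩ H)) :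
    restrD (Dir G) ψ ∈ Incar G := by
  have hwfψ : WFN ψ [] ∅ := hG.1 _ hψ.1.1
  have hwfχ : WFN (restrD (Dir G) ψ) [] ∅ :=
    WFN.neg _ _ _ (fun J => pIf_wf (wfn_app hwfψ J) (WFP.omega _))
  have hχG : restrD (Dir G) ψ ∈ G := by
    refine mem_of_agree_on_heads hG hneG hψ.1.1 hwfχ (fun J hJ => ?_)
    exact pIf_pos ((dir_eq_heads hG hneG) ▸ hJ)
  have hχψ : LeN true false (restrD (Dir G) ψ) ψ := by
    refine leN_app_iff.mpr (fun J => ?_)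
    by_cases hJ : J ∈ Dir G
    · rw [restrD_app, pIf_pos hJ]; exact LeP.refl _
    · rw [restrD_app, pIf_neg hJ]; exact leP_omega _
  refine ⟨hχG, leN_refl _, fun ζ hζ hle => ?_⟩
  have hwfζ : WFN ζ [] ∅ := hG.1 _ hζ
  set τ := glueD (Dir G) (Dir H) ζ ψ with hτdef
  have hwfτ : WFN τ [] ∅ :=
    WFN.neg _ _ _ (fun J => pIf_wf (wfn_app hwfζ J) (pIf_wf (wfn_app hwfψ J) (WFP.omega _)))
  have hτG : τ ∈ G := by
    refine mem_of_agree_on_heads hG hneG hζ hwfτ (fun J hJ => ?_)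
    exact pIf_pos ((dir_eq_heads hG hneG) ▸ hJ)
  have hτH : τ ∈ H := by
    refine mem_of_agree_on_heads hH hneH hψ.1.2 hwfτ (fun J hJ => ?_)
    have hJH : J ∈ Dir H := (dir_eq_heads hH hneH) ▸ hJ
    rw [hτdef, glueD_app, pIf_neg (notG_of_H hdisj hJH), pIf_pos hJH]
  have hτψ : LeN true false τ ψ := by
    refine leN_app_iff.mpr (fun J => ?_)
    by_cases hJG : J ∈ Dir G
    · rw [glueD_app, pIf_pos hJG]
      have := leN_app_iff.mp hle J
      rwa [restrD_app, pIf_pos hJG] at this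
    · by_cases hJH : J ∈ Dir H
      · rw [glueD_app, pIf_neg hJG, pIf_pos hJH]; exact LeP.refl _
      · rw [glueD_app, pIf_neg hJG, pIf_neg hJH]; exact leP_omega _
  have hψτ := hψ.2.2 τ ⟨hτG, hτH⟩ hτψ
  refine leN_app_iff.mpr (fun J => ?_)
  by_cases hJG : J ∈ Dir G
  · rw [restrD_app, pIf_pos hJG]
    have := leN_app_iff.mp hψτ J
    rwa [glueD_app, pIf_pos hJG] at this
  · rw [restrD_app, pIf_neg hJG]; exact leP_omega _

lemma dir_inter (hG : IsNegBehaviour G) (hH : IsNegBehaviour H)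
    (hneG : G.Nonempty) (hneH : H.Nonempty) (hdisj : Dir G ∩ Dir H = ∅) : Dir (G ∩ H) = Dir G ∪ Dir H := by
  have hGH := inter_behaviour hG hH
  have hneGH : (G ∩ H).Nonempty := ⟨dai, dai_mem hG hneG, dai_mem hH hneH⟩
  rw [dir_eq_heads hGH hneGH, dir_eq_heads hG hneG, dir_eq_heads hH hneH]
  ext I
  simp only [Heads, Set.mem_setOf_eq, Set.mem_union,
    part1 hG hH hneG hneH hdisj, Set.mem_union]
  exact ⟨fun ⟨k, h⟩ => h.elim (fun h => Or.inl ⟨k, h⟩) (fun h => Or.inr ⟨k, h⟩),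
    fun h => h.elim (fun ⟨k, h⟩ => ⟨k, Or.inl h⟩) (fun ⟨k, h⟩ => ⟨k, Or.inr h⟩)⟩

end Main

end LudAux
open LudAux

/-- for disjoint negative behaviours `G` and `H` (disjoint
directories), the orthogonal of their intersection is the union of their
orthogonals, and the incarnation of `G ∩ H` is in bijection with the cartesian
product of the incarnations of `G` and `H`. -/
theorem disjoint_behaviours_with (G H : Set NegDesign)
    (hG : IsNegBehaviour G) (hH : IsNegBehaviour H)
    (hdisj : Dir G ∩ Dir H = ∅) :
    orthSetN (G ∩ H) = orthSetN G ∪ orthSetN H ∧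
      Nonempty (↥(Incar (G ∩ H)) ≃ ↥(Incar G) × ↥(Incar H)) := by
  classical
  have hsub : ∀ K : Set NegDesign, orthSetN K ⊆ orthSetN (∅ : Set NegDesign) :=
    fun K φ hφ => ⟨hφ.1, fun ψ h => absurd h (Set.notMem_empty ψ)⟩
  have hinc : Incar (∅ : Set NegDesign) = ∅ :=
    Set.eq_empty_iff_forall_notMem.mpr (fun ψ h => h.1)
  rcases G.eq_empty_or_nonempty with rfl | hneG
  · constructor
    · rw [Set.empty_inter]
      exact (Set.union_eq_left.mpr (hsub H)).symm
    · haveI : IsEmpty ↥(Incar ((∅ : Set NegDesign) ∩ H)) :=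
        Set.isEmpty_coe_sort.mpr (by rw [Set.empty_inter, hinc])
      haveI : IsEmpty ↥(Incar (∅ : Set NegDesign)) := Set.isEmpty_coe_sort.mpr hinc
      exact ⟨Equiv.equivOfIsEmpty _ _⟩
  rcases H.eq_empty_or_nonempty with rfl | hneH
  · constructor
    · rw [Set.inter_empty]
      exact (Set.union_eq_right.mpr (hsub G)).symm
    · haveI : IsEmpty ↥(Incar (G ∩ (∅ : Set NegDesign))) :=
        Set.isEmpty_coe_sort.mpr (by rw [Set.inter_empty, hinc])
      haveI : IsEmpty ↥(Incar (∅ : Set NegDesign)) := Set.isEmpty_coe_sort.mpr hinc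
      exact ⟨Equiv.equivOfIsEmpty _ _⟩
  -- main case : both behaviours nonempty
  have hdisj' : Dir H ∩ Dir G = ∅ := by rw [Set.inter_comm]; exact hdisj
  have hdd := dir_inter hG hH hneG hneH hdisj
  refine ⟨part1 hG hH hneG hneH hdisj, ⟨?_⟩⟩
  have hrG : ∀ ψ : ↥(Incar (G ∩ H)), restrD (Dir G) ψ.1 ∈ Incar G :=
    fun ψ => restr_incar hG hH hneG hneH hdisj ψ.2
  have hrH : ∀ ψ : ↥(Incar (G ∩ H)), restrD (Dir H) ψ.1 ∈ Incar H := by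
    intro ψ
    have h2 : ψ.1 ∈ Incar (H ∩ G) := by rw [Set.inter_comm]; exact ψ.2
    exact restr_incar hH hG hneH hneG hdisj' h2
  refine
    { toFun := fun ψ => (⟨restrD (Dir G) ψ.1, hrG ψ⟩, ⟨restrD (Dir H) ψ.1, hrH ψ⟩)
      invFun := fun p => ⟨glueD (Dir G) (Dir H) p.1.1 p.2.1,
        glue_incar hG hH hneG hneH hdisj p.1.2 p.2.2⟩
      left_inv := ?_
      right_inv := ?_ }
  · rintro ⟨ψ, hψ⟩
    refine Subtype.ext (neg_ext (fun J => ?_))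
    by_cases hJG : J ∈ Dir G
    · rw [glueD_app, pIf_pos hJG, restrD_app, pIf_pos hJG]
    · by_cases hJH : J ∈ Dir H
      · rw [glueD_app, pIf_neg hJG, pIf_pos hJH, restrD_app, pIf_pos hJH]
      · rw [glueD_app, pIf_neg hJG, pIf_neg hJH]
        have hJ : J ∉ Dir (G ∩ H) := by
          rw [hdd]; rintro (h | h) <;> [exact hJG h; exact hJH h]
        exact (incar_app_omega hψ hJ).symm
  · rintro ⟨⟨χ, hχ⟩, ⟨χ', hχ'⟩⟩
    have e1 : restrD (Dir G) (glueD (Dir G) (Dir H) χ χ') = χ := by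
      refine neg_ext (fun J => ?_)
      by_cases hJG : J ∈ Dir G
      · rw [restrD_app, pIf_pos hJG, glueD_app, pIf_pos hJG]
      · rw [restrD_app, pIf_neg hJG]
        exact (incar_app_omega hχ hJG).symm
    have e2 : restrD (Dir H) (glueD (Dir G) (Dir H) χ χ') = χ' := by
      refine neg_ext (fun J => ?_)
      by_cases hJH : J ∈ Dir H
      · rw [restrD_app, pIf_pos hJH, glueD_app,
          pIf_neg (notG_of_H hdisj hJH), pIf_pos hJH]
      · rw [restrD_app, pIf_neg hJH]
        exact (incar_app_omega hχ' hJH).symm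
    exact Prod.ext (Subtype.ext e1) (Subtype.ext e2)
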